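/- Let G : ℝ³ → ℝ be continuously differentiable (coordinates (t, x₀, x₁)) and suppose ∂G/∂t + (t + x₀)∂G/∂x₀ + (t + x₁)∂G/∂x₁ = 0 everywhere. Then there exists a function G₂ : ℝ² → ℝ such that G(t, x₀, x₁) = G₂(e^{−t}(x₀ + t + 1), e^{−t}(x₁ + t + 1)) for all (t, x₀, x₁) ∈ ℝ³. -/

import Mathlib

/-- First characteristics reduction for the Lie family of Abel equations: if `G : ℝ³ → ℝ`
(coordinates `(t,x₀,x₁)`) is `C¹` and satisfies
`∂G/∂t + (t + x₀)∂G/∂x₀ + (t + x₁)∂G/∂x₁ = 0` everywhere, then there is `G₂ : ℝ² → ℝ`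
with `G(t, x₀, x₁) = G₂(e^{−t}(x₀ + t + 1), e^{−t}(x₁ + t + 1))` for all `(t,x₀,x₁)`. -/
theorem abel_characteristics_one (G : ℝ × ℝ × ℝ → ℝ) (hG : ContDiff ℝ 1 G)
    (h : ∀ p : ℝ × ℝ × ℝ,
      fderiv ℝ G p (1, 0, 0)
        + (p.1 + p.2.1) * fderiv ℝ G p (0, 1, 0)
        + (p.1 + p.2.2) * fderiv ℝ G p (0, 0, 1) = 0) :
    ∃ G₂ : ℝ × ℝ → ℝ, ∀ p : ℝ × ℝ × ℝ,
      G p = G₂ (Real.exp (-p.1) * (p.2.1 + p.1 + 1), Real.exp (-p.1) * (p.2.2 + p.1 + 1)) := by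
  have hG' : Differentiable ℝ G := hG.differentiable one_ne_zero
  refine ⟨fun q => G (0, q.1 - 1, q.2 - 1), ?_⟩
  rintro ⟨t, x₀, x₁⟩
  set ξ₀ : ℝ := Real.exp (-t) * (x₀ + t + 1) with hξ₀
  set ξ₁ : ℝ := Real.exp (-t) * (x₁ + t + 1) with hξ₁
  set c : ℝ → ℝ × ℝ × ℝ :=
    fun s => (s, ξ₀ * Real.exp s - s - 1, ξ₁ * Real.exp s - s - 1) with hc
  have hcd : ∀ s, HasDerivAt c (1, ξ₀ * Real.exp s - 1, ξ₁ * Real.exp s - 1) s := by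
    intro s
    refine ((hasDerivAt_id s).prodMk (HasDerivAt.prodMk ?_ ?_))
    · exact (((Real.hasDerivAt_exp s).const_mul ξ₀).sub (hasDerivAt_id s)).sub_const 1
    · exact (((Real.hasDerivAt_exp s).const_mul ξ₁).sub (hasDerivAt_id s)).sub_const 1
  have key : ∀ s, HasDerivAt (G ∘ c) 0 s := by
    intro s
    have h1 := (hG' (c s)).hasFDerivAt.comp_hasDerivAt s (hcd s)
    have hvec : (1, ξ₀ * Real.exp s - 1, ξ₁ * Real.exp s - 1)
        = (1, 0, 0) + ((s + (ξ₀ * Real.exp s - s - 1)) : ℝ) • ((0 : ℝ), (1 : ℝ), (0 : ℝ))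
          + ((s + (ξ₁ * Real.exp s - s - 1)) : ℝ) • ((0 : ℝ), (0 : ℝ), (1 : ℝ)) := by
      simp [Prod.ext_iff, Prod.smul_def, smul_eq_mul]
      ring_nf
      constructor <;> first | trivial | ring
    rw [hvec] at h1
    have hval : fderiv ℝ G (c s) ((1, 0, 0)
        + ((s + (ξ₀ * Real.exp s - s - 1)) : ℝ) • ((0 : ℝ), (1 : ℝ), (0 : ℝ))
        + ((s + (ξ₁ * Real.exp s - s - 1)) : ℝ) • ((0 : ℝ), (0 : ℝ), (1 : ℝ))) = 0 := by
      have hs := h (c s)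
      simp only [map_add, map_smul, smul_eq_mul]
      simp only [hc] at hs ⊢
      linarith [hs]
    rwa [hval] at h1
  have hconst : (G ∘ c) t = (G ∘ c) 0 :=
    is_const_of_deriv_eq_zero (fun s => (key s).differentiableAt)
      (fun s => (key s).deriv) t 0
  have hct : c t = (t, x₀, x₁) := by
    have he : Real.exp (-t) * Real.exp t = 1 := by
      rw [← Real.exp_add]; simp
    have h0 : ∀ x : ℝ, Real.exp (-t) * (x + t + 1) * Real.exp t - t - 1 = x := by
      intro x
      have hx : Real.exp (-t) * (x + t + 1) * Real.exp t
          = (Real.exp (-t) * Real.exp t) * (x + t + 1) := by ring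
      rw [hx, he]; ring
    simp only [hc, hξ₀, hξ₁]
    rw [h0 x₀, h0 x₁]
  have hc0 : c 0 = (0, ξ₀ - 1, ξ₁ - 1) := by simp [hc]
  have := hconst
  simp only [Function.comp, hct, hc0] at this
  simpa using this
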